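/- The linear functional ω(f) = ∫₀¹ f(x) dx on L^p([0,1]) with 1 ≤ p < 2 is not representable on the quasi *-algebra (L^p([0,1]), L^∞([0,1])): there exists f ∈ L^p([0,1]) such that no constant γ > 0 satisfies |∫₀¹ f(x)φ(x) dx| ≤ γ · ‖φ‖₂ for all φ ∈ L^∞([0,1]). -/

import Mathlib

open MeasureTheory Set Real
open scoped ENNReal

noncomputable def stmt3μ : Measure ℝ := volume.restrict (Set.Icc (0:ℝ) 1)
noncomputable def stmt3f : ℝ → ℂ := fun x => ((x ^ (-(1/2) : ℝ) : ℝ) : ℂ)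
noncomputable def stmt3φ (ε : ℝ) : ℝ → ℂ := Set.indicator (Set.Ici ε) stmt3f

lemma stmt3f_meas : Measurable stmt3f := by unfold stmt3f; fun_prop

lemma stmt3_int_rpow {r : ℝ} (hr : -1 < r) :
    IntegrableOn (fun x : ℝ => x ^ r) (Set.Icc (0:ℝ) 1) volume := by
  rw [integrableOn_Icc_iff_integrableOn_Ioc]
  have := intervalIntegral.intervalIntegrable_rpow' (a := 0) (b := 1) hr
  rwa [intervalIntegrable_iff_integrableOn_Ioc_of_le (by norm_num)] at this

lemma stmt3f_mem {p : ℝ≥0∞} (hp1 : 1 ≤ p) (hp2 : p < 2) : MemLp stmt3f p stmt3μ := by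
  have hp0 : p ≠ 0 := by positivity
  have hpt : p ≠ ∞ := (hp2.trans_le le_top).ne
  have hr1 : 1 ≤ p.toReal := by
    rw [← ENNReal.toReal_one]; exact ENNReal.toReal_mono hpt hp1
  have hr2 : p.toReal < 2 := by
    have := (ENNReal.toReal_lt_toReal hpt (by norm_num : (2:ℝ≥0∞) ≠ ∞)).mpr hp2
    simpa using this
  rw [← memLp_norm_rpow_iff (q := p) stmt3f_meas.aestronglyMeasurable hp0 hpt,
    ENNReal.div_self hp0 hpt, memLp_one_iff_integrable]
  have key : Integrable (fun x : ℝ => x ^ (-(p.toReal/2))) stmt3μ :=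
    stmt3_int_rpow (by linarith)
  refine key.congr ?_
  unfold stmt3μ
  filter_upwards [ae_restrict_mem measurableSet_Icc] with x hx
  rcases eq_or_lt_of_le hx.1 with h0 | h0
  · simp [stmt3f, ← h0, Real.zero_rpow, show -(p.toReal/2) ≠ 0 by intro h; nlinarith,
      show p.toReal ≠ 0 by intro h; nlinarith, Real.rpow_eq_zero_iff_of_nonneg]
  · simp only [stmt3f, Complex.norm_real, Real.norm_eq_abs,
      abs_of_nonneg (Real.rpow_nonneg hx.1 _), ← Real.rpow_mul hx.1]
    ring_nf

lemma stmt3_inter {ε : ℝ} (hε0 : 0 < ε) :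
    Set.Icc (0:ℝ) 1 ∩ Set.Ici ε = Set.Icc ε 1 := by
  ext x
  simp only [Set.mem_inter_iff, Set.mem_Icc, Set.mem_Ici]
  constructor
  · rintro ⟨⟨_, h1⟩, h2⟩; exact ⟨h2, h1⟩
  · rintro ⟨h1, h2⟩; exact ⟨⟨le_trans hε0.le h1, h2⟩, h1⟩

lemma stmt3_int_inv {ε : ℝ} (hε0 : 0 < ε) :
    Integrable (Set.indicator (Set.Ici ε) (fun x : ℝ => x⁻¹)) stmt3μ := by
  unfold stmt3μ
  rw [integrable_indicator_iff measurableSet_Ici, IntegrableOn,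
    Measure.restrict_restrict measurableSet_Ici,
    Set.inter_comm, stmt3_inter hε0]
  exact (continuousOn_inv₀.mono (fun x hx => ne_of_gt (lt_of_lt_of_le hε0 hx.1))).integrableOn_compact
    isCompact_Icc

lemma stmt3_intval {ε : ℝ} (hε0 : 0 < ε) (hε1 : ε ≤ 1) :
    ∫ x, Set.indicator (Set.Ici ε) (fun x : ℝ => x⁻¹) x ∂stmt3μ = -Real.log ε := by
  unfold stmt3μ
  rw [integral_indicator measurableSet_Ici, Measure.restrict_restrict measurableSet_Ici,
    Set.inter_comm, stmt3_inter hε0, integral_Icc_eq_integral_Ioc,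
    ← intervalIntegral.integral_of_le hε1, integral_inv_of_pos hε0 one_pos]
  rw [Real.log_div one_ne_zero (ne_of_gt hε0), Real.log_one, zero_sub]

lemma stmt3_prod_ae {ε : ℝ} (hε0 : 0 < ε) :
    (fun x => stmt3f x * stmt3φ ε x) =ᵐ[stmt3μ]
      fun x => ((Set.indicator (Set.Ici ε) (fun x : ℝ => x⁻¹) x : ℝ) : ℂ) := by
  unfold stmt3μ
  filter_upwards [ae_restrict_mem measurableSet_Icc] with x hx
  by_cases hxε : x ∈ Set.Ici ε
  · have hx0 : 0 < x := lt_of_lt_of_le hε0 hxε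
    rw [stmt3φ, Set.indicator_of_mem hxε, Set.indicator_of_mem hxε]
    simp only [stmt3f, ← Complex.ofReal_mul, ← Real.rpow_add hx0]
    norm_num [Real.rpow_neg_one]
  · rw [stmt3φ, Set.indicator_of_notMem hxε, Set.indicator_of_notMem hxε]
    simp

lemma stmt3_cint {ε : ℝ} (hε0 : 0 < ε) (hε1 : ε ≤ 1) :
    ∫ x, stmt3f x * stmt3φ ε x ∂stmt3μ = ((-Real.log ε : ℝ) : ℂ) := by
  rw [integral_congr_ae (stmt3_prod_ae hε0), ← stmt3_intval hε0 hε1]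
  exact integral_ofReal

lemma stmt3_elp {ε : ℝ} (hε0 : 0 < ε) (hε1 : ε ≤ 1) :
    eLpNorm (stmt3φ ε) 2 stmt3μ = (ENNReal.ofReal (-Real.log ε)) ^ (1/2 : ℝ) := by
  have h2 : (2:ℝ≥0∞).toReal = 2 := by norm_num
  rw [eLpNorm_eq_lintegral_rpow_enorm_toReal (by norm_num) (by norm_num), h2]
  congr 1
  rw [← stmt3_intval hε0 hε1,
    ofReal_integral_eq_lintegral_ofReal (stmt3_int_inv hε0)
      (Filter.Eventually.of_forall fun x =>
        Set.indicator_nonneg (fun y hy => inv_nonneg.mpr (le_trans hε0.le hy)) x)]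
  refine lintegral_congr_ae ?_
  unfold stmt3μ
  filter_upwards [ae_restrict_mem measurableSet_Icc] with x hx
  by_cases hxε : x ∈ Set.Ici ε
  · have hx0 : 0 < x := lt_of_lt_of_le hε0 hxε
    rw [stmt3φ, Set.indicator_of_mem hxε, Set.indicator_of_mem hxε]
    have hnn : (0:ℝ) ≤ x ^ (-(1/2):ℝ) := Real.rpow_nonneg hx0.le _
    have hnorm : ‖stmt3f x‖ = x ^ (-(1/2):ℝ) := by
      simp only [stmt3f, Complex.norm_real, Real.norm_eq_abs]
      exact abs_of_nonneg hnn
    rw [← ofReal_norm, hnorm,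
      ENNReal.ofReal_rpow_of_nonneg hnn (by norm_num : (0:ℝ) ≤ 2),
      ← Real.rpow_mul hx0.le]
    norm_num [Real.rpow_neg_one]
  · rw [stmt3φ, Set.indicator_of_notMem hxε, Set.indicator_of_notMem hxε]
    simp [ENNReal.zero_rpow_of_pos]

lemma stmt3φ_mem {ε : ℝ} (hε0 : 0 < ε) : MemLp (stmt3φ ε) ∞ stmt3μ := by
  refine memLp_top_of_bound (stmt3f_meas.indicator measurableSet_Ici).aestronglyMeasurable
    (ε ^ (-(1/2):ℝ)) (Filter.Eventually.of_forall fun x => ?_)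
  by_cases hxε : x ∈ Set.Ici ε
  · have hx0 : 0 < x := lt_of_lt_of_le hε0 hxε
    rw [stmt3φ, Set.indicator_of_mem hxε]
    simp only [stmt3f, Complex.norm_real, Real.norm_eq_abs,
      abs_of_nonneg (Real.rpow_nonneg hx0.le _)]
    exact Real.rpow_le_rpow_of_nonpos hε0 hxε (by norm_num)
  · rw [stmt3φ, Set.indicator_of_notMem hxε]
    simp [Real.rpow_nonneg hε0.le]

theorem stmt_3 (p : ℝ≥0∞) (hp1 : 1 ≤ p) (hp2 : p < 2) :
    ∃ f : Lp ℂ p (MeasureTheory.volume.restrict (Set.Icc (0 : ℝ) 1)),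
      ¬ ∃ γ : ℝ, 0 < γ ∧
        ∀ φ : Lp ℂ ∞ (MeasureTheory.volume.restrict (Set.Icc (0 : ℝ) 1)),
          ‖∫ x, (f : ℝ → ℂ) x * (φ : ℝ → ℂ) x
              ∂(MeasureTheory.volume.restrict (Set.Icc (0 : ℝ) 1))‖ ≤
            γ * (eLpNorm (φ : ℝ → ℂ) 2 (MeasureTheory.volume.restrict (Set.Icc (0 : ℝ) 1))).toReal := by
  have hfm := stmt3f_mem hp1 hp2
  refine ⟨hfm.toLp stmt3f, ?_⟩
  rintro ⟨γ, hγ, hbound⟩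
  set ε : ℝ := Real.exp (-(γ+1)^2) with hεdef
  have hε0 : 0 < ε := Real.exp_pos _
  have hε1 : ε ≤ 1 := Real.exp_le_one_iff.mpr (by nlinarith)
  have hL : -Real.log ε = (γ+1)^2 := by rw [hεdef, Real.log_exp]; ring
  have hφm := stmt3φ_mem (ε := ε) hε0
  have hb := hbound (hφm.toLp _)
  -- rewrite LHS
  have h1 : ∫ x, ((hfm.toLp stmt3f : Lp ℂ p stmt3μ) : ℝ → ℂ) x *
        ((hφm.toLp (stmt3φ ε) : Lp ℂ ∞ stmt3μ) : ℝ → ℂ) x ∂stmt3μ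
      = ((-Real.log ε : ℝ) : ℂ) := by
    refine (integral_congr_ae ((hfm.coeFn_toLp).mul (hφm.coeFn_toLp))).trans ?_
    exact stmt3_cint hε0 hε1
  have h2 : eLpNorm ((hφm.toLp (stmt3φ ε) : Lp ℂ ∞ stmt3μ) : ℝ → ℂ) 2 stmt3μ
      = (ENNReal.ofReal (-Real.log ε)) ^ (1/2 : ℝ) := by
    rw [eLpNorm_congr_ae hφm.coeFn_toLp]
    exact stmt3_elp hε0 hε1
  unfold stmt3μ at h1 h2 hb
  rw [h1, h2] at hb
  have h3 : ‖((-Real.log ε : ℝ) : ℂ)‖ = (γ+1)^2 := by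
    rw [Complex.norm_real, Real.norm_eq_abs, hL, abs_of_nonneg (by positivity)]
  have h4 : ((ENNReal.ofReal (-Real.log ε)) ^ (1/2 : ℝ)).toReal = γ + 1 := by
    rw [← ENNReal.toReal_rpow, ENNReal.toReal_ofReal (by rw [hL]; positivity), hL,
      ← Real.sqrt_eq_rpow, Real.sqrt_sq (by linarith)]
  rw [h3, h4] at hb
  nlinarith
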